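/- If a superior edge set 𝓔 = E_{k_1} ∪ ... ∪ E_{k_q} (the k_i pairwise distinct, each E_{k_i} a k_i-superior edge set with respect to G) is deleted from a graph G, then the core number of every vertex decreases by at most 1. -/

import Mathlib

open SimpleGraph

/-- The core number of a vertex: the largest `k` such that the vertex lies in a
subgraph of `G` with minimum degree at least `k`. -/
noncomputable def coreNumber {V : Type*} (G : SimpleGraph V) (v : V) : ℕ :=
  sSup {k : ℕ | ∃ H : G.Subgraph, v ∈ H.verts ∧ ∀ w ∈ H.verts, k ≤ (H.neighborSet w).ncard}

/-- `S` is a `k`-superior edge set of existing edges of `G`. -/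
def IsKSuperiorDeleteSet {V : Type*} (G : SimpleGraph V) (k : ℕ) (S : Set (Sym2 V)) : Prop :=
  (∀ e ∈ S, e ∈ G.edgeSet ∧ ∃ u v : V, e = s(u,v) ∧
      coreNumber G u = k ∧ coreNumber G u ≤ coreNumber G v) ∧
  ∀ e₁ ∈ S, ∀ e₂ ∈ S, e₁ ≠ e₂ → ∀ u : V, u ∈ e₁ → u ∈ e₂ → k < coreNumber G u

section Aux

variable {V : Type*} [Fintype V] (G : SimpleGraph V)

lemma coreSet_nonempty (v : V) :
    {k : ℕ | ∃ H : G.Subgraph, v ∈ H.verts ∧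
      ∀ w ∈ H.verts, k ≤ (H.neighborSet w).ncard}.Nonempty :=
  ⟨0, G.singletonSubgraph v, by simp [SimpleGraph.singletonSubgraph],
    fun w _ => Nat.zero_le _⟩

lemma coreSet_bddAbove (v : V) :
    BddAbove {k : ℕ | ∃ H : G.Subgraph, v ∈ H.verts ∧
      ∀ w ∈ H.verts, k ≤ (H.neighborSet w).ncard} := by
  refine ⟨Fintype.card V, ?_⟩
  rintro k ⟨H, hv, hdeg⟩
  calc k ≤ (H.neighborSet v).ncard := hdeg v hv
    _ ≤ (Set.univ : Set V).ncard :=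
        Set.ncard_le_ncard (Set.subset_univ _) Set.finite_univ
    _ = Fintype.card V := by rw [Set.ncard_univ, Nat.card_eq_fintype_card]

lemma le_coreNumber {v : V} {k : ℕ} (H : G.Subgraph) (hv : v ∈ H.verts)
    (hdeg : ∀ w ∈ H.verts, k ≤ (H.neighborSet w).ncard) : k ≤ coreNumber G v :=
  le_csSup (coreSet_bddAbove G v) ⟨H, hv, hdeg⟩

lemma coreNumber_witness (v : V) :
    ∃ H : G.Subgraph, v ∈ H.verts ∧
      ∀ w ∈ H.verts, coreNumber G v ≤ (H.neighborSet w).ncard :=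
  Nat.sSup_mem (coreSet_nonempty G v) (coreSet_bddAbove G v)

/-- A vertex has at least `coreNumber G u` neighbors of core number at least
`coreNumber G u`. -/
lemma coreNumber_le_ncard_highcore_neighbors (u : V) :
    coreNumber G u ≤ {x | G.Adj u x ∧ coreNumber G u ≤ coreNumber G x}.ncard := by
  obtain ⟨H, hu, hdeg⟩ := coreNumber_witness G u
  have hsub : H.neighborSet u ⊆ {x | G.Adj u x ∧ coreNumber G u ≤ coreNumber G x} := by
    intro x hx
    have hadj : H.Adj u x := hx
    refine ⟨H.adj_sub hadj, ?_⟩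
    exact le_coreNumber G H (H.edge_vert hadj.symm) hdeg
  calc coreNumber G u ≤ (H.neighborSet u).ncard := hdeg u hu
    _ ≤ _ := Set.ncard_le_ncard hsub (Set.toFinite _)

end Aux

theorem superiorDeleteSet_core_decrease_le_one {V : Type*} [Fintype V] (G : SimpleGraph V)
    (ks : Finset ℕ) (F : ℕ → Set (Sym2 V))
    (hF : ∀ k ∈ ks, IsKSuperiorDeleteSet G k (F k))
    (S : Set (Sym2 V)) (hS : S = ⋃ k ∈ ks, F k) (v : V) :
    coreNumber G v ≤ coreNumber (G.deleteEdges S) v + 1 := by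
  set c := coreNumber G v with hc
  -- key claim: any vertex `w` is incident to at most one edge of `S` whose other
  -- endpoint has core number at least `coreNumber G w`.
  have key : ∀ w : V, ∀ x y : V,
      coreNumber G w ≤ coreNumber G x → coreNumber G w ≤ coreNumber G y →
      s(w,x) ∈ S → s(w,y) ∈ S → x = y := by
    intro w x y hx hy hxS hyS
    by_contra hxy
    -- each such edge lies in `F (coreNumber G w)`
    have memF : ∀ z : V, coreNumber G w ≤ coreNumber G z → s(w,z) ∈ S →
        s(w,z) ∈ F (coreNumber G w) ∧ coreNumber G w ∈ ks := by
      intro z hz hzS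
      rw [hS] at hzS
      simp only [Set.mem_iUnion] at hzS
      obtain ⟨k, hk, hzF⟩ := hzS
      obtain ⟨a, b, hab, hka, hkab⟩ := ((hF k hk).1 _ hzF).2
      have : k = coreNumber G w := by
        rcases Sym2.eq_iff.mp hab with ⟨h1, h2⟩ | ⟨h1, h2⟩
        · rw [h1]; exact hka.symm
        · subst h1; subst h2; omega
      rw [this] at hzF
      exact ⟨hzF, this ▸ hk⟩
    obtain ⟨hxF, hks⟩ := memF x hx hxS
    obtain ⟨hyF, _⟩ := memF y hy hyS
    have hne : s(w,x) ≠ s(w,y) := by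
      intro h
      rcases Sym2.eq_iff.mp h with ⟨_, h2⟩ | ⟨h1, h2⟩
      · exact hxy h2
      · exact hxy (h2.trans h1)
    have := (hF _ hks).2 _ hxF _ hyF hne w (Sym2.mem_mk_left w x) (Sym2.mem_mk_left w y)
    omega
  -- the witness subgraph of `G.deleteEdges S`: induced on vertices of core ≥ c
  set J : (G.deleteEdges S).Subgraph :=
    { verts := {w | c ≤ coreNumber G w}
      Adj := fun x y =>
        (G.deleteEdges S).Adj x y ∧ c ≤ coreNumber G x ∧ c ≤ coreNumber G y
      adj_sub := fun h => h.1
      edge_vert := fun h => h.2.1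
      symm := ⟨fun x y h => ⟨h.1.symm, h.2.2, h.2.1⟩⟩ } with hJ
  have hvJ : v ∈ J.verts := le_of_eq hc
  have hdeg : ∀ w ∈ J.verts, c - 1 ≤ (J.neighborSet w).ncard := by
    intro w hw
    have hwc : c ≤ coreNumber G w := hw
    set c'' := coreNumber G w with hc''
    set N := {x | G.Adj w x ∧ c'' ≤ coreNumber G x} with hN
    have hNcard : c'' ≤ N.ncard := coreNumber_le_ncard_highcore_neighbors G w
    set B := {x ∈ N | s(w,x) ∈ S} with hB
    have hBsub : B ⊆ N := Set.sep_subset _ _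
    have hB1 : B.ncard ≤ 1 := by
      rw [Set.ncard_le_one (B.toFinite)]
      rintro x ⟨⟨_, hx2⟩, hxS⟩ y ⟨⟨_, hy2⟩, hyS⟩
      exact key w x y hx2 hy2 hxS hyS
    have hsub : N \ B ⊆ J.neighborSet w := by
      rintro x ⟨⟨hx1, hx2⟩, hxB⟩
      have hxnS : s(w,x) ∉ S := fun h => hxB ⟨⟨hx1, hx2⟩, h⟩
      refine ⟨?_, hwc, le_trans hwc hx2⟩
      rw [SimpleGraph.deleteEdges_adj]
      exact ⟨hx1, hxnS⟩
    have hdiff : (N \ B).ncard = N.ncard - B.ncard := Set.ncard_diff hBsub B.toFinite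
    have hle : (N \ B).ncard ≤ (J.neighborSet w).ncard :=
      Set.ncard_le_ncard hsub (Set.toFinite _)
    omega
  have h1 : c - 1 ≤ coreNumber (G.deleteEdges S) v :=
    le_coreNumber (G.deleteEdges S) J hvJ hdeg
  omega
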